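/- (The Jordan theorem) For every n ∈ ℕ there exists m ∈ ℕ such that every finite subgroup Γ of GL_n(ℂ) has an abelian subgroup A ≤ Γ of index at most m in Γ. -/

import Mathlib

open Matrix Finset
open scoped ComplexOrder

attribute [local instance] Matrix.frobeniusNormedAddCommGroup Matrix.frobeniusNormedRing
  Matrix.frobeniusNormedSpace Matrix.frobeniusNormedAlgebra

set_option maxHeartbeats 1000000
set_option linter.unusedSectionVars false

namespace JordanAux

variable {n : ℕ}
local notation "Mat" => Matrix (Fin n) (Fin n) ℂ

lemma norm_sq_sum (A : Mat) : ‖A‖ ^ 2 = ∑ i, ∑ j, ‖A i j‖ ^ 2 := by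
  rw [Matrix.frobenius_norm_def, ← Real.rpow_natCast _ 2, ← Real.rpow_mul (by positivity)]
  norm_num

lemma trace_star_mul_self (A : Mat) : (star A * A).trace = ((‖A‖ ^ 2 : ℝ) : ℂ) := by
  rw [norm_sq_sum]
  push_cast
  rw [Matrix.star_eq_conjTranspose, Matrix.trace]
  simp only [Matrix.diag, Matrix.mul_apply, Matrix.conjTranspose_apply]
  rw [Finset.sum_comm]
  congr 1; ext i; congr 1; ext j
  rw [Complex.star_def, ← Complex.normSq_eq_conj_mul_self, Complex.normSq_eq_norm_sq]
  norm_num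

lemma norm_eq_of_sq_eq {A B : Mat} (h : ((‖A‖ ^ 2 : ℝ) : ℂ) = ((‖B‖ ^ 2 : ℝ) : ℂ)) : ‖A‖ = ‖B‖ := by
  have h' : ‖A‖ ^ 2 = ‖B‖ ^ 2 := by exact_mod_cast h
  nlinarith [norm_nonneg A, norm_nonneg B]

lemma norm_unitary_mul {U : Mat} (hU : star U * U = 1) (A : Mat) : ‖U * A‖ = ‖A‖ := by
  apply norm_eq_of_sq_eq
  rw [← trace_star_mul_self, ← trace_star_mul_self, StarMul.star_mul]
  calc (star A * star U * (U * A)).trace = (star A * (star U * U) * A).trace := by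
        rw [mul_assoc, mul_assoc, mul_assoc]
      _ = (star A * A).trace := by rw [hU, mul_one]

lemma norm_mul_unitary {U : Mat} (hU : star U * U = 1) (A : Mat) : ‖A * U‖ = ‖A‖ := by
  have hU' : U * star U = 1 := mul_eq_one_comm.mp hU
  apply norm_eq_of_sq_eq
  rw [← trace_star_mul_self, ← trace_star_mul_self, StarMul.star_mul]
  have e1 : star U * star A * (A * U) = star U * (star A * A * U) := by noncomm_ring
  rw [e1, Matrix.trace_mul_comm, mul_assoc, hU', mul_one]

lemma norm_unitary (U : Mat) (hU : star U * U = 1) : ‖U‖ = Real.sqrt n := by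
  have h := trace_star_mul_self U
  rw [hU, Matrix.trace_one] at h
  have h2 : ‖U‖ ^ 2 = (n : ℝ) := by
    have : ((‖U‖ ^ 2 : ℝ) : ℂ) = ((n : ℝ) : ℂ) := by rw [← h]; norm_num
    exact_mod_cast this
  rw [← h2, Real.sqrt_sq (norm_nonneg U)]


lemma cauchy_schwarz_trace (Q X : Mat) : ‖(Q * X).trace‖ ≤ ‖Q‖ * ‖X‖ := by
  have h1 : (Q * X).trace = ∑ i, ∑ j, Q i j * X j i := by
    simp [Matrix.trace, Matrix.diag, Matrix.mul_apply]
  set S : ℝ := ∑ p : Fin n × Fin n, ‖Q p.1 p.2‖ * ‖X p.2 p.1‖ with hS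
  have h2 : ‖(Q * X).trace‖ ≤ S := by
    rw [h1, hS, Fintype.sum_prod_type]
    refine le_trans (norm_sum_le _ _) (Finset.sum_le_sum fun i _ => ?_)
    refine le_trans (norm_sum_le _ _) (Finset.sum_le_sum fun j _ => ?_)
    rw [norm_mul]
  have h3 : S ^ 2 ≤ ‖Q‖ ^ 2 * (‖X‖ ^ 2) := by
    have := Finset.sum_mul_sq_le_sq_mul_sq Finset.univ
      (fun p : Fin n × Fin n => ‖Q p.1 p.2‖) (fun p : Fin n × Fin n => ‖X p.2 p.1‖)
    have e1 : ∑ p : Fin n × Fin n, ‖Q p.1 p.2‖ ^ 2 = ‖Q‖ ^ 2 := by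
      rw [norm_sq_sum, Fintype.sum_prod_type]
    have e2 : ∑ p : Fin n × Fin n, ‖X p.2 p.1‖ ^ 2 = ‖X‖ ^ 2 := by
      rw [norm_sq_sum, Fintype.sum_prod_type, Finset.sum_comm]
    rw [← e1, ← e2]
    exact this
  have hSnn : 0 ≤ S := Finset.sum_nonneg fun p _ => by positivity
  have h4 : S ≤ ‖Q‖ * ‖X‖ := by
    have h5 := Real.sqrt_le_sqrt h3
    rw [Real.sqrt_sq hSnn, ← mul_pow,
      Real.sqrt_sq (mul_nonneg (norm_nonneg Q) (norm_nonneg X))] at h5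
    exact h5
  linarith


section FiniteGroup

variable {G : Type*} [Group G] [Finite G]

lemma frobenius_step (u : G →* Mat) (huni : ∀ g, star (u g) * u g = 1)
    (hinj : Function.Injective u) {a b : G}
    (hcomm : a * (a * b * a⁻¹ * b⁻¹) = (a * b * a⁻¹ * b⁻¹) * a) (hb : ‖u b - 1‖ < 1) :
    a * b = b * a := by
  set c := a * b * a⁻¹ * b⁻¹ with hc
  have hac : Commute a c := hcomm
  have habc : a * b * a⁻¹ = c * b := by rw [hc]; group
  have hconj : ∀ k : ℕ, a ^ k * b * (a ^ k)⁻¹ = c ^ k * b := by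
    intro k; induction k with
    | zero => simp
    | succ k ih =>
      have h1 : a ^ (k + 1) * b * (a ^ (k + 1))⁻¹ = a * (a ^ k * b * (a ^ k)⁻¹) * a⁻¹ := by
        group
      rw [h1, ih]
      calc a * (c ^ k * b) * a⁻¹ = a * c ^ k * b * a⁻¹ := by group
        _ = c ^ k * a * b * a⁻¹ := by rw [(hac.pow_right k).eq]
        _ = c ^ k * (a * b * a⁻¹) := by group
        _ = c ^ k * (c * b) := by rw [habc]
        _ = c ^ (k + 1) * b := by rw [pow_succ]; group
  have htr : ∀ k : ℕ, ((u c) ^ k * u b).trace = (u b).trace := by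
    intro k
    have h1 : (u c) ^ k * u b = u (a ^ k) * u b * u ((a ^ k)⁻¹) := by
      rw [← _root_.map_pow u c k, ← _root_.map_mul, ← _root_.map_mul, ← _root_.map_mul,
        hconj k]
    rw [h1, Matrix.trace_mul_comm, ← mul_assoc, ← _root_.map_mul, inv_mul_cancel,
      _root_.map_one, one_mul]
  set M := Nat.card G with hMdef
  have hM0 : 0 < M := Nat.card_pos
  set x := u c with hx
  have hcM : c ^ M = 1 := by rw [hMdef]; exact pow_card_eq_one'
  have hxM : x ^ M = 1 := by rw [hx, ← _root_.map_pow, hcM, _root_.map_one]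
  set T : Mat := ∑ k ∈ Finset.range M, x ^ k with hT
  have hxsum : x * T = ∑ k ∈ Finset.range M, x ^ (k + 1) := by
    rw [hT, Finset.mul_sum]
    exact Finset.sum_congr rfl fun k _ => (pow_succ' x k).symm
  have hsum' : (∑ k ∈ Finset.range M, x ^ (k + 1)) + x ^ 0 = T + x ^ 0 := by
    calc (∑ k ∈ Finset.range M, x ^ (k + 1)) + x ^ 0
        = ∑ k ∈ Finset.range (M + 1), x ^ k := (Finset.sum_range_succ' _ _).symm
      _ = (∑ k ∈ Finset.range M, x ^ k) + x ^ M := Finset.sum_range_succ _ _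
      _ = T + x ^ 0 := by rw [hxM, pow_zero, hT]
  have hxT : x * T = T := by
    apply add_right_cancel (b := x ^ 0)
    rw [hxsum]; exact hsum'
  have hTx : T * x = T := by
    apply add_right_cancel (b := x ^ 0)
    have : T * x = ∑ k ∈ Finset.range M, x ^ (k + 1) := by
      rw [hT, Finset.sum_mul]
      exact Finset.sum_congr rfl fun k _ => (pow_succ x k).symm
    rw [this]; exact hsum'
  have hTxk : ∀ k : ℕ, T * x ^ k = T := by
    intro k; induction k with
    | zero => simp
    | succ k ih => rw [pow_succ, ← mul_assoc, ih, hTx]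
  have hxstar : star x * x = 1 := huni c
  have hxstar' : x * star x = 1 := mul_eq_one_comm.mp hxstar
  have hcmx : Commute x (star x) := by
    unfold Commute SemiconjBy
    rw [hxstar', hxstar]
  have hstarpow : ∀ k, k ≤ M → star (x ^ k) = x ^ (M - k) := by
    intro k hk
    have h1 : x ^ (M - k) * x ^ k = 1 := by rw [← pow_add, Nat.sub_add_cancel hk, hxM]
    have h2 : x ^ k * star (x ^ k) = 1 := by
      rw [star_pow, ← hcmx.mul_pow, hxstar', one_pow]
    exact (left_inv_eq_right_inv h1 h2).symm
  have hstarT : star T = T := by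
    calc star T = ∑ k ∈ Finset.range M, star (x ^ k) := by rw [hT, star_sum]
      _ = ∑ k ∈ Finset.range M, x ^ (M - k) :=
          Finset.sum_congr rfl fun k hk => hstarpow k (le_of_lt (Finset.mem_range.mp hk))
      _ = ∑ k ∈ Finset.range M, x ^ (M - 1 - k + 1) := by
          refine Finset.sum_congr rfl fun k hk => ?_
          have := Finset.mem_range.mp hk
          congr 1
          omega
      _ = ∑ k ∈ Finset.range M, x ^ (k + 1) := Finset.sum_range_reflect (fun j => x ^ (j + 1)) M
      _ = x * T := hxsum.symm
      _ = T := hxT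
  set P : Mat := (M : ℂ)⁻¹ • T with hP
  have hMne : (M : ℂ) ≠ 0 := by
    simp only [ne_eq, Nat.cast_eq_zero]
    omega
  have hsP : star P = P := by
    rw [hP, star_smul, hstarT]
    congr 1
    simp
  have hPx : x * P = P := by rw [hP, mul_smul_comm, hxT]
  have hTT : T * T = (M : ℂ) • T := by
    calc T * T = ∑ k ∈ Finset.range M, T * x ^ k := by rw [hT, Finset.mul_sum]
      _ = ∑ _k ∈ Finset.range M, T := Finset.sum_congr rfl fun k _ => hTxk k
      _ = M • T := by rw [Finset.sum_const, Finset.card_range]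
      _ = (M : ℂ) • T := (Nat.cast_smul_eq_nsmul ℂ M T).symm
  have hPP : P * P = P := by
    rw [hP, smul_mul_assoc, mul_smul_comm, hTT, smul_smul, smul_smul]
    congr 1
    field_simp
  have htrPB : (P * u b).trace = (u b).trace := by
    have h2 : (T * u b).trace = (M : ℂ) * (u b).trace := by
      calc (T * u b).trace = ∑ k ∈ Finset.range M, (x ^ k * u b).trace := by
            rw [hT, Finset.sum_mul, Matrix.trace_sum]
        _ = ∑ _k ∈ Finset.range M, (u b).trace := Finset.sum_congr rfl fun k _ => htr k
        _ = (M : ℂ) * (u b).trace := by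
            rw [Finset.sum_const, Finset.card_range, nsmul_eq_mul]
    rw [hP, smul_mul_assoc, Matrix.trace_smul, h2, smul_eq_mul, ← mul_assoc,
      inv_mul_cancel₀ hMne, one_mul]
  set Q : Mat := 1 - P with hQ
  have hQQ : Q * Q = Q := by
    have h1 : (1 - P) * (1 - P) = 1 - P - (P - P * P) := by noncomm_ring
    rw [hQ, h1, hPP]
    simp
  have hsQ : star Q = Q := by rw [hQ, star_sub, star_one, hsP]
  have htrQB : (Q * (u b - 1)).trace = -Q.trace := by
    have h1 : Q * (u b - 1) = (u b - P * u b) - Q := by rw [hQ]; noncomm_ring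
    rw [h1, Matrix.trace_sub, Matrix.trace_sub, htrPB]
    simp
  have htrQ : Q.trace = ((‖Q‖ ^ 2 : ℝ) : ℂ) := by
    calc Q.trace = (Q * Q).trace := by rw [hQQ]
      _ = (star Q * Q).trace := by rw [hsQ]
      _ = ((‖Q‖ ^ 2 : ℝ) : ℂ) := trace_star_mul_self Q
  have hcs : ‖Q‖ ^ 2 ≤ ‖Q‖ * ‖u b - 1‖ := by
    have h2 := cauchy_schwarz_trace Q (u b - 1)
    rw [htrQB, norm_neg, htrQ] at h2
    rwa [Complex.norm_real, Real.norm_eq_abs, abs_of_nonneg (by positivity)] at h2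
  have hQle : ‖Q‖ ≤ ‖Q‖ ^ 2 := by
    calc ‖Q‖ = ‖Q * Q‖ := by rw [hQQ]
      _ ≤ ‖Q‖ * ‖Q‖ := norm_mul_le _ _
      _ = ‖Q‖ ^ 2 := (sq ‖Q‖).symm
  have hQ0 : Q = 0 := by
    by_contra h
    have hpos : 0 < ‖Q‖ := norm_pos_iff.mpr h
    nlinarith
  have hP1 : P = 1 := by
    rw [hQ] at hQ0
    exact (sub_eq_zero.mp hQ0).symm
  have hx1 : x = 1 := by
    have h := hPx
    rw [hP1, mul_one] at h
    exact h
  have hc1 : c = 1 := by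
    apply hinj
    rw [_root_.map_one, ← hx]
    exact hx1
  calc a * b = (a * b * a⁻¹ * b⁻¹) * (b * a) := by group
    _ = b * a := by rw [← hc, hc1, one_mul]


lemma commutator_norm (u : G →* Mat) (huni : ∀ g, star (u g) * u g = 1) (a b : G) :
    ‖u (a * b * a⁻¹ * b⁻¹) - 1‖ ≤ 2 * ‖u a - 1‖ * ‖u b - 1‖ := by
  have key : (u (a * b * a⁻¹ * b⁻¹) - 1) * (u b * u a) = u a * u b - u b * u a := by
    have e1 : u (a * b * a⁻¹ * b⁻¹) * (u b * u a) = u a * u b := by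
      rw [← _root_.map_mul, ← _root_.map_mul, ← _root_.map_mul]
      congr 1
      group
    rw [sub_mul, e1, one_mul]
  have h1 : ‖u (a * b * a⁻¹ * b⁻¹) - 1‖ = ‖u a * u b - u b * u a‖ := by
    rw [← key, ← mul_assoc, norm_mul_unitary (huni a), norm_mul_unitary (huni b)]
  have h2 : u a * u b - u b * u a
      = (u a - 1) * (u b - 1) - (u b - 1) * (u a - 1) := by noncomm_ring
  rw [h1, h2]
  calc ‖(u a - 1) * (u b - 1) - (u b - 1) * (u a - 1)‖
      ≤ ‖(u a - 1) * (u b - 1)‖ + ‖(u b - 1) * (u a - 1)‖ := norm_sub_le _ _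
    _ ≤ ‖u a - 1‖ * ‖u b - 1‖ + ‖u b - 1‖ * ‖u a - 1‖ :=
        add_le_add (norm_mul_le _ _) (norm_mul_le _ _)
    _ = 2 * ‖u a - 1‖ * ‖u b - 1‖ := by ring

lemma ball_commute (u : G →* Mat) (huni : ∀ g, star (u g) * u g = 1)
    (hinj : Function.Injective u) {a b : G}
    (ha : ‖u a - 1‖ < 1 / 2) (hb : ‖u b - 1‖ < 1) : a * b = b * a := by
  classical
  by_contra hab
  set T : Set G := {g : G | ¬ a * g = g * a ∧ ‖u g - 1‖ < 1} with hTdef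
  have hbT : b ∈ T := ⟨hab, hb⟩
  obtain ⟨b₀, hb₀, hmin⟩ := Set.exists_min_image T (fun g => ‖u g - 1‖) (Set.toFinite T) ⟨b, hbT⟩
  have hb₀pos : 0 < ‖u b₀ - 1‖ := by
    rcases eq_or_lt_of_le (norm_nonneg (u b₀ - 1)) with h | h
    · exfalso
      have : u b₀ = 1 := by
        have := h.symm
        rw [norm_eq_zero, sub_eq_zero] at this
        exact this
      have : b₀ = 1 := hinj (by rw [this, _root_.map_one])
      exact hb₀.1 (by rw [this, mul_one, one_mul])
    · exact h
  have hcn : ‖u (a * b₀ * a⁻¹ * b₀⁻¹) - 1‖ < ‖u b₀ - 1‖ := by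
    calc ‖u (a * b₀ * a⁻¹ * b₀⁻¹) - 1‖ ≤ 2 * ‖u a - 1‖ * ‖u b₀ - 1‖ :=
          commutator_norm u huni a b₀
      _ < 1 * ‖u b₀ - 1‖ := by
          apply mul_lt_mul_of_pos_right _ hb₀pos
          linarith
      _ = ‖u b₀ - 1‖ := one_mul _
  rcases Classical.em (a * (a * b₀ * a⁻¹ * b₀⁻¹) = (a * b₀ * a⁻¹ * b₀⁻¹) * a) with hc | hc
  · have h9 : a * (a * b₀ * a⁻¹ * b₀⁻¹) = (a * b₀ * a⁻¹ * b₀⁻¹) * a := hc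
    exact hb₀.1 (frobenius_step u huni hinj h9 hb₀.2)
  · have hmem : (a * b₀ * a⁻¹ * b₀⁻¹) ∈ T := ⟨hc, lt_trans hcn hb₀.2⟩
    have := hmin _ hmem
    linarith

lemma closure_abelian (u : G →* Mat) (huni : ∀ g, star (u g) * u g = 1)
    (hinj : Function.Injective u) :
    ∀ x ∈ Subgroup.closure {g : G | ‖u g - 1‖ < 1 / 2},
    ∀ y ∈ Subgroup.closure {g : G | ‖u g - 1‖ < 1 / 2}, x * y = y * x := by
  intro x hx y hy
  refine Subgroup.closure_induction₂
    (p := fun x y _ _ => Commute x y) ?_ ?_ ?_ ?_ ?_ ?_ ?_ hx hy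
  · intro g h hg hh
    exact ball_commute u huni hinj hg (lt_trans hh (by norm_num))
  · intro g _; exact Commute.one_left g
  · intro g _; exact Commute.one_right g
  · intro g h k _ _ _ h1 h2; exact h1.mul_left h2
  · intro g h k _ _ _ h1 h2; exact h1.mul_right h2
  · intro g h _ _ h1; exact h1.inv_left
  · intro g h _ _ h1; exact h1.inv_right


end FiniteGroup

lemma exists_unitarization (Γ : Subgroup (Matrix.GeneralLinearGroup (Fin n) ℂ)) [Finite Γ] :
    ∃ u : Γ →* Mat, (∀ g, star (u g) * u g = 1) ∧ Function.Injective u := by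
  classical
  haveI : Fintype Γ := Fintype.ofFinite Γ
  let ι : Γ →* Mat := (Units.coeHom Mat).comp Γ.subtype
  have hιinj : Function.Injective ι := fun a b hab => Subtype.ext (Units.ext hab)
  set P : Mat := ∑ g : Γ, (ι g)ᴴ * ι g with hPdef
  have hP1 : (∑ g ∈ Finset.univ.erase (1 : Γ), (ι g)ᴴ * ι g) + 1 = P := by
    rw [hPdef, ← Finset.sum_erase_add Finset.univ (fun g : Γ => (ι g)ᴴ * ι g)
      (Finset.mem_univ (1 : Γ))]
    simp
  have hrest : (∑ g ∈ Finset.univ.erase (1 : Γ), (ι g)ᴴ * ι g).PosSemidef := by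
    refine Finset.sum_induction (fun g : Γ => (ι g)ᴴ * ι g) Matrix.PosSemidef
      (fun a b ha hb => ha.add hb) Matrix.PosSemidef.zero ?_
    intro g _
    exact Matrix.posSemidef_conjTranspose_mul_self _
  have hPd : P.PosDef := by
    rw [← hP1]
    exact Matrix.PosDef.posSemidef_add hrest Matrix.PosDef.one
  set S : Mat := open scoped MatrixOrder in CFC.sqrt P with hSdef
  have hS : S * S = P := open scoped MatrixOrder in CFC.sqrt_mul_sqrt_self P hPd.posSemidef.nonneg
  have hSH : star S = S := open scoped MatrixOrder in (CFC.sqrt_nonneg P).posSemidef.1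
  have hdet : IsUnit S.det := by
    have h1 : IsUnit (S.det * S.det) := by
      rw [← Matrix.det_mul, hS]
      exact (Matrix.isUnit_iff_isUnit_det P).mp hPd.isUnit
    exact isUnit_of_mul_isUnit_left h1
  have hSS' : S * S⁻¹ = 1 := Matrix.mul_nonsing_inv _ hdet
  have hS'S : S⁻¹ * S = 1 := Matrix.nonsing_inv_mul _ hdet
  have hSIH : star S⁻¹ = S⁻¹ := by
    rw [Matrix.star_eq_conjTranspose] at hSH ⊢
    exact Matrix.IsHermitian.inv hSH
  have hinvar : ∀ g : Γ, star (ι g) * P * ι g = P := by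
    intro g
    rw [hPdef, Finset.mul_sum, Finset.sum_mul]
    have hterm : ∀ h : Γ, star (ι g) * ((ι h)ᴴ * ι h) * ι g = (ι (h * g))ᴴ * ι (h * g) := by
      intro h
      rw [_root_.map_mul, Matrix.conjTranspose_mul, Matrix.star_eq_conjTranspose]
      noncomm_ring
    rw [Finset.sum_congr rfl fun h _ => hterm h]
    exact Fintype.sum_equiv (Equiv.mulRight g) _ _ fun h => rfl
  refine ⟨{ toFun := fun g => S * ι g * S⁻¹
            map_one' := by
              show S * ι (1 : Γ) * S⁻¹ = 1
              rw [_root_.map_one, mul_one, hSS']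
            map_mul' := by
              intro g h
              show S * ι (g * h) * S⁻¹ = S * ι g * S⁻¹ * (S * ι h * S⁻¹)
              rw [_root_.map_mul]
              have h1 : S * ι g * S⁻¹ * (S * ι h * S⁻¹) = S * ι g * (S⁻¹ * S) * ι h * S⁻¹ := by
                noncomm_ring
              rw [h1, hS'S, mul_one]
              noncomm_ring }, ?_, ?_⟩
  · intro g
    show star (S * ι g * S⁻¹) * (S * ι g * S⁻¹) = 1
    rw [StarMul.star_mul, StarMul.star_mul, hSIH, hSH]
    have h1 : S⁻¹ * (star (ι g) * S) * (S * ι g * S⁻¹)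
        = S⁻¹ * (star (ι g) * (S * S) * ι g) * S⁻¹ := by noncomm_ring
    rw [h1, hS, hinvar g, ← hS]
    have h2 : S⁻¹ * (S * S) * S⁻¹ = (S⁻¹ * S) * (S * S⁻¹) := by noncomm_ring
    rw [h2, hS'S, hSS', one_mul]
  · intro g h hgh
    simp only [MonoidHom.coe_mk, OneHom.coe_mk] at hgh
    apply hιinj
    have h2 : ∀ X : Mat, S⁻¹ * (S * X * S⁻¹) * S = X := by
      intro X
      have h3 : S⁻¹ * (S * X * S⁻¹) * S = S⁻¹ * S * X * (S⁻¹ * S) := by noncomm_ring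
      rw [h3, hS'S, one_mul, mul_one]
    rw [← h2 (ι g), ← h2 (ι h), hgh]


theorem jordan_abstract (n : ℕ) : ∃ m : ℕ, ∀ (G : Type) (_ : Group G) (_ : Finite G)
    (u : G →* Matrix (Fin n) (Fin n) ℂ), (∀ g, star (u g) * u g = 1) →
    Function.Injective u →
    ∃ A : Subgroup G, A.index ≤ m ∧ ∀ a ∈ A, ∀ b ∈ A, a * b = b * a := by
  have hcomp : IsCompact (Metric.closedBall (0 : Matrix (Fin n) (Fin n) ℂ) (Real.sqrt n)) :=
    isCompact_closedBall _ _
  obtain ⟨t, tsub, tfin, tcov⟩ := hcomp.finite_cover_balls (e := (1 : ℝ) / 4) (by norm_num)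
  haveI : Finite ↥t := tfin.to_subtype
  refine ⟨Nat.card ↥t, ?_⟩
  intro G _ _ u huni hinj
  set A : Subgroup G := Subgroup.closure {g : G | ‖u g - 1‖ < 1 / 2} with hA
  refine ⟨A, ?_, closure_abelian u huni hinj⟩
  have hball : ∀ g : G, u g ∈ Metric.closedBall (0 : Matrix (Fin n) (Fin n) ℂ) (Real.sqrt n) := by
    intro g
    rw [Metric.mem_closedBall, dist_zero_right, norm_unitary _ (huni g)]
  have hnet : ∀ q : G ⧸ A, ∃ p : ↥t, u (Quotient.out q) ∈ Metric.ball (p : Matrix (Fin n) (Fin n) ℂ) (1 / 4) := by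
    intro q
    have h1 := tcov (hball (Quotient.out q))
    rw [Set.mem_iUnion₂] at h1
    obtain ⟨p, hp, hmem⟩ := h1
    exact ⟨⟨p, hp⟩, hmem⟩
  choose f hf using hnet
  have hfinj : Function.Injective f := by
    intro q₁ q₂ hq
    by_contra hne
    have hnotin : (Quotient.out q₁)⁻¹ * Quotient.out q₂ ∉ A := by
      intro hmem
      apply hne
      exact Quotient.out_equiv_out.mp ((QuotientGroup.leftRel_apply).mpr hmem)
    have hnorm : (1 : ℝ) / 2 ≤ ‖u ((Quotient.out q₁)⁻¹ * Quotient.out q₂) - 1‖ := by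
      by_contra h
      push_neg at h
      exact hnotin (Subgroup.subset_closure h)
    have hdist : dist (u (Quotient.out q₁)) (u (Quotient.out q₂)) < 1 / 2 := by
      have h1 := hf q₁
      have h2 := hf q₂
      rw [Metric.mem_ball] at h1 h2
      rw [hq] at h1
      calc dist (u (Quotient.out q₁)) (u (Quotient.out q₂)) ≤ dist (u (Quotient.out q₁)) (f q₂ : Matrix (Fin n) (Fin n) ℂ)
            + dist (u (Quotient.out q₂)) (f q₂ : Matrix (Fin n) (Fin n) ℂ) := dist_triangle_right _ _ _
        _ < 1 / 4 + 1 / 4 := add_lt_add h1 h2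
        _ = 1 / 2 := by norm_num
    have heq : ‖u (Quotient.out q₁) - u (Quotient.out q₂)‖ = ‖u ((Quotient.out q₁)⁻¹ * Quotient.out q₂) - 1‖ := by
      have e1 : u (Quotient.out q₁) * (1 - u ((Quotient.out q₁)⁻¹ * Quotient.out q₂)) = u (Quotient.out q₁) - u (Quotient.out q₂) := by
        rw [mul_sub, mul_one, ← _root_.map_mul, mul_inv_cancel_left]
      rw [← e1, norm_unitary_mul (huni (Quotient.out q₁)), norm_sub_rev]
    rw [dist_eq_norm, heq] at hdist
    linarith
  calc A.index = Nat.card (G ⧸ A) := Subgroup.index_eq_card A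
    _ ≤ Nat.card ↥t := Nat.card_le_card_of_injective f hfinj


end JordanAux

/-- The Jordan theorem: for every `n` there is `m` such that every finite subgroup of
`GL_n(ℂ)` has an abelian subgroup of index at most `m`. -/
theorem jordan_theorem (n : ℕ) :
    ∃ m : ℕ, ∀ Γ : Subgroup (Matrix.GeneralLinearGroup (Fin n) ℂ),
      (Γ : Set (Matrix.GeneralLinearGroup (Fin n) ℂ)).Finite →
      ∃ A : Subgroup Γ, A.index ≤ m ∧ ∀ a ∈ A, ∀ b ∈ A, a * b = b * a := by
  obtain ⟨m, hm⟩ := JordanAux.jordan_abstract n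
  refine ⟨m, ?_⟩
  intro Γ hfin
  haveI : Finite Γ := hfin.to_subtype
  obtain ⟨u, huni, hinj⟩ := JordanAux.exists_unitarization Γ
  exact hm Γ inferInstance inferInstance u huni hinj
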